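/- arXiv:2110.06683 — 2 statements merged into one kernel-verified Lean document; each statement's English description precedes it below -/
import Mathlib

section
/- Let M ≥ 1 be an integer and z₀ = exp(iπ/M). Then (1/(M·(1 - z₀))) · ∏_{k=1}^{M-1} ((1 - z₀^(2k)) / (1 - z₀^(2k+1)))^(2k+1) = (-i)^(M-1) · (M/2)^M. -/
open Complex Finset

private lemma sum1 (a n : ℕ) : ∑ k ∈ range n, ((a:ℤ) + 2*k + 1) = n*a + n^2 := by
  induction n with
  | zero => simp
  | succ n ih => rw [sum_range_succ, ih]; push_cast; ring

private lemma sum2 (a n : ℕ) :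
    3 * ∑ k ∈ range n, ((a:ℤ) + 2*k + 1)^2 = 3*(n:ℤ)*(a:ℤ)^2 + 6*(a:ℤ)*(n:ℤ)^2 + 4*(n:ℤ)^3 - (n:ℤ) := by
  induction n with
  | zero => simp
  | succ n ih => rw [sum_range_succ, mul_add, ih]; push_cast; ring

private lemma sum3 (n : ℕ) : 6 * ∑ k ∈ range n, ((k:ℤ)+1)*(2*k+3) = n*(n+1)*(4*n+5) := by
  induction n with
  | zero => simp
  | succ n ih => rw [sum_range_succ, mul_add, ih]; push_cast; ring

private lemma parity_split (f : ℕ → ℂ) (n : ℕ) :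
    ∏ j ∈ range (2*n+1), f j
      = (∏ k ∈ range (n+1), f (2*k)) * ∏ k ∈ range n, f (2*k+1) := by
  induction n with
  | zero => simp
  | succ n ih =>
      rw [show 2*(n+1)+1 = (2*n+1)+1+1 by ring, prod_range_succ, prod_range_succ, ih,
        prod_range_succ (fun k => f (2*k)) (n+1), prod_range_succ (fun k => f (2*k+1)) n,
        show 2*(n+1) = 2*n+1+1 by ring]
      ring

/-- For `M ≥ 1` and `z₀ = e^{iπ/M}`,
`(1/(M(1-z₀))) ∏_{k=1}^{M-1} ((1-z₀^{2k})/(1-z₀^{2k+1}))^{2k+1} = (-i)^{M-1} (M/2)^M`. -/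
theorem stmt6 (M : ℕ) (hM : 1 ≤ M) (z₀ : ℂ)
    (hz : z₀ = Complex.exp (Real.pi * Complex.I / M)) :
    (1 / (M * (1 - z₀))) *
        ∏ k ∈ Finset.Icc 1 (M - 1),
          ((1 - z₀ ^ (2 * k)) / (1 - z₀ ^ (2 * k + 1))) ^ (2 * k + 1) =
      (-Complex.I) ^ (M - 1) * ((M : ℂ) / 2) ^ M := by
  have hM0 : (M:ℂ) ≠ 0 := Nat.cast_ne_zero.2 (by omega)
  have hprim : IsPrimitiveRoot z₀ (2*M) := by
    have h := Complex.isPrimitiveRoot_exp (2*M) (by omega)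
    have he : Complex.exp (2 * Real.pi * Complex.I / ((2*M : ℕ) : ℂ)) = z₀ := by
      rw [hz]; congr 1; push_cast; field_simp
    rwa [he] at h
  have hzM : z₀ ^ M = -1 := by
    rw [hz, ← Complex.exp_nat_mul,
      show (M:ℂ) * (Real.pi * Complex.I / M) = Real.pi * Complex.I by field_simp]
    exact Complex.exp_pi_mul_I
  have h2M : z₀ ^ (2*M) = 1 := by
    rw [show 2*M = M*2 by ring, pow_mul, hzM]; norm_num
  have hcne : ∀ j, 0 < j → j < 2*M → (1 - z₀^j) ≠ 0 := by
    intro j h1 h2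
    exact sub_ne_zero.2 fun h => hprim.pow_ne_one_of_pos_of_lt h1.ne' h2 h.symm
  have hcM : (1 : ℂ) - z₀^M = 2 := by rw [hzM]; ring
  have hrefl : ∀ j, j ≤ 2*M → (1 - z₀^(2*M - j)) = -z₀^(2*M-j) * (1 - z₀^j) := by
    intro j hj
    have hw : z₀^(2*M-j) * z₀^j = 1 := by
      rw [← pow_add, Nat.sub_add_cancel hj, h2M]
    linear_combination -hw
  have hcrel : ∀ k, k ≤ M → (1 - z₀^(M+k)) = z₀^k * (1 - z₀^(M-k)) := by
    intro k hk
    have hu : z₀^k * z₀^(M-k) = -1 := by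
      rw [← pow_add, Nat.add_sub_cancel' hk, hzM]
    have hv : z₀^(M+k) = -z₀^k := by rw [pow_add, hzM]; ring
    rw [hv]; linear_combination hu
  have hfac : ∀ k : ℕ, (1 - z₀^(2*k+2)) = (1 - z₀^(k+1)) * (1 - z₀^(M+(k+1))) := by
    intro k
    have hv : z₀^(M+(k+1)) = -z₀^(k+1) := by rw [pow_add, hzM]; ring
    rw [hv, show 2*k+2 = (k+1)*2 by ring, pow_mul]; ring
  -- root-of-unity products
  have hL1 : ∏ j ∈ range (2*M-1), (1 - z₀^(j+1)) = ((2*M : ℕ) : ℂ) := by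
    have h' : IsPrimitiveRoot z₀ ((2*M-1) + 1) := by
      rwa [show 2*M-1+1 = 2*M by omega]
    have h1 := h'.prod_one_sub_pow_eq_order
    rw [h1, Nat.cast_sub (by omega : 1 ≤ 2*M)]; push_cast; ring
  have hL2 : ∏ k ∈ range (M-1), (1 - z₀^(2*k+2)) = (M : ℂ) := by
    have hp2 : IsPrimitiveRoot (z₀^2) M := hprim.pow (by omega) (by ring)
    have h' : IsPrimitiveRoot (z₀^2) ((M-1) + 1) := by rwa [show M-1+1 = M by omega]
    have h2 := h'.prod_one_sub_pow_eq_order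
    have h3 : ((M-1 : ℕ) : ℂ) + 1 = (M:ℂ) := by
      rw [Nat.cast_sub (by omega : 1 ≤ M)]; ring
    rw [h3] at h2
    rw [← h2]
    refine prod_congr rfl fun k hk => ?_
    rw [← pow_mul, show 2*(k+1) = 2*k+2 by ring]
  have hR : ∏ k ∈ range M, (1 - z₀^(2*k+1)) = 2 := by
    have hs := parity_split (fun j => 1 - z₀^(j+1)) (M-1)
    rw [show 2*(M-1)+1 = 2*M-1 by omega, show M-1+1 = M by omega] at hs
    have h2 : ∏ k ∈ range (M-1), (1 - z₀^(2*k+1+1)) = (M:ℂ) := by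
      rw [← hL2]
    rw [hL1, h2] at hs
    have h4 : (M:ℂ) * 2 = (M:ℂ) * ∏ k ∈ range M, (1 - z₀^(2*k+1)) := by
      push_cast at hs; linear_combination hs
    exact (mul_left_cancel₀ hM0 h4).symm
  -- Gauss sum for exponent
  have hS0I : z₀ ^ (∑ j ∈ range (M-1), (j+1)) = Complex.I^(M-1) := by
    have hshift : ∑ j ∈ range (M-1), (j+1) = ∑ i ∈ range M, i := by
      conv_rhs => rw [show M = (M-1)+1 by omega]
      rw [Finset.sum_range_succ' (fun i => i) (M-1)]; simp
    have hg := Finset.sum_range_id_mul_two M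
    have hG : 2 * ∑ j ∈ range (M-1), (j+1) = M*(M-1) := by rw [hshift]; omega
    rcases Nat.even_or_odd M with ⟨m, hm⟩ | ⟨m, hm⟩
    · have hS0 : ∑ j ∈ range (M-1), (j+1) = m*(M-1) := by
        have h2 : 2*(m*(M-1)) = M*(M-1) := by
          rw [hm]; ring
        omega
      have hzI : z₀ ^ m = Complex.I := by
        rw [hz, ← Complex.exp_nat_mul,
          show (m:ℂ) * (Real.pi * Complex.I / M) = ((Real.pi/2 : ℝ) : ℂ) * Complex.I by
            have hmc : (m:ℂ) ≠ 0 := Nat.cast_ne_zero.2 (by omega)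
            rw [hm]; push_cast; field_simp [hmc]; ring]
        rw [Complex.exp_mul_I]; norm_num
      rw [hS0, pow_mul, hzI]
    · have hS0 : ∑ j ∈ range (M-1), (j+1) = M*m := by
        have h2 : 2*(M*m) = M*(M-1) := by
          rw [hm, show 2*m+1-1 = 2*m by omega]; ring
        omega
      rw [hS0, pow_mul, hzM, show M-1 = 2*m by omega, pow_mul, Complex.I_sq]
  -- square of the half product
  have hE2 : (∏ j ∈ range (M-1), (1 - z₀^(j+1)))^2 = M * (-Complex.I)^(M-1) := by
    have hsplit : ∏ j ∈ range (2*M-1), (1 - z₀^(j+1))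
        = ((∏ j ∈ range (M-1), (1 - z₀^(j+1))) * (1 - z₀^M)) *
          (z₀^(∑ j ∈ range (M-1), (j+1)) * ∏ j ∈ range (M-1), (1 - z₀^(j+1))) := by
      rw [show 2*M-1 = M + (M-1) by omega, prod_range_add]
      congr 1
      · have h5 : ∏ j ∈ range M, (1 - z₀^(j+1))
            = (∏ j ∈ range (M-1), (1 - z₀^(j+1))) * (1 - z₀^((M-1)+1)) := by
          conv_lhs => rw [show M = (M-1)+1 by omega]
          exact prod_range_succ _ _
        rw [h5, show M-1+1 = M by omega]
      · calc ∏ k ∈ range (M-1), (1 - z₀^(M+k+1))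
            = ∏ k ∈ range (M-1), (z₀^(k+1) * (1 - z₀^(M-(k+1)))) := by
              refine prod_congr rfl fun k hk => ?_
              rw [mem_range] at hk
              rw [show M + k + 1 = M + (k+1) by omega, hcrel (k+1) (by omega)]
          _ = (∏ k ∈ range (M-1), z₀^(k+1)) * ∏ k ∈ range (M-1), (1 - z₀^(M-(k+1))) :=
              prod_mul_distrib
          _ = z₀^(∑ j ∈ range (M-1), (j+1)) * ∏ j ∈ range (M-1), (1 - z₀^(j+1)) := by
              congr 1
              · exact Finset.prod_pow_eq_pow_sum _ _ _
              · rw [← prod_range_reflect (fun j => (1 - z₀^(j+1))) (M-1)]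
                refine prod_congr rfl fun k hk => ?_
                rw [mem_range] at hk
                rw [show M - (k+1) = M-1-1-k+1 by omega]
    rw [hL1, hcM, hS0I] at hsplit
    have hP : Complex.I^(M-1) * (∏ j ∈ range (M-1), (1 - z₀^(j+1)))^2 = M := by
      push_cast at hsplit; linear_combination -hsplit/2
    have h1 : Complex.I^(M-1) * (-Complex.I)^(M-1) = 1 := by
      rw [← mul_pow]; simp [Complex.I_mul_I]
    calc (∏ j ∈ range (M-1), (1 - z₀^(j+1)))^2
        = (∏ j ∈ range (M-1), (1 - z₀^(j+1)))^2 * (Complex.I^(M-1) * (-Complex.I)^(M-1)) := by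
          rw [h1, mul_one]
      _ = (Complex.I^(M-1) * (∏ j ∈ range (M-1), (1 - z₀^(j+1)))^2) * (-Complex.I)^(M-1) := by
          ring
      _ = M * (-Complex.I)^(M-1) := by rw [hP]
  -- the numerator product
  have hE1 : ∏ k ∈ range (M-1), (1 - z₀^(2*k+2))^(2*k+3)
      = z₀^(∑ k ∈ range (M-1), (k+1)*(2*k+3)) *
        (∏ j ∈ range (M-1), (1 - z₀^(j+1)))^(2*M+2) := by
    have step1 : ∏ k ∈ range (M-1), (1 - z₀^(2*k+2))^(2*k+3)
        = (∏ k ∈ range (M-1), z₀^((k+1)*(2*k+3))) *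
          ((∏ k ∈ range (M-1), (1 - z₀^(k+1))^(2*k+3)) *
           ∏ k ∈ range (M-1), (1 - z₀^(M-(k+1)))^(2*k+3)) := by
      rw [← prod_mul_distrib, ← prod_mul_distrib]
      refine prod_congr rfl fun k hk => ?_
      rw [mem_range] at hk
      rw [hfac k, hcrel (k+1) (by omega), mul_pow, mul_pow, ← pow_mul]
      ring
    have hre : ∏ k ∈ range (M-1), (1 - z₀^(M-(k+1)))^(2*k+3)
        = ∏ j ∈ range (M-1), (1 - z₀^(j+1))^(2*(M-2-j)+3) := by
      rw [← prod_range_reflect (fun j => (1 - z₀^(j+1))^(2*(M-2-j)+3)) (M-1)]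
      refine prod_congr rfl fun k hk => ?_
      rw [mem_range] at hk
      have e1 : M-(k+1) = (M-1-1-k)+1 := by omega
      have e2 : (2*k+3) = 2*(M-2-(M-1-1-k))+3 := by omega
      rw [e1, e2]
    have hmerge : (∏ k ∈ range (M-1), (1 - z₀^(k+1))^(2*k+3)) *
          (∏ j ∈ range (M-1), (1 - z₀^(j+1))^(2*(M-2-j)+3))
        = (∏ j ∈ range (M-1), (1 - z₀^(j+1)))^(2*M+2) := by
      rw [← prod_pow, ← prod_mul_distrib]
      refine prod_congr rfl fun k hk => ?_
      rw [mem_range] at hk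
      rw [← pow_add, show (2*k+3) + (2*(M-2-k)+3) = 2*M+2 by omega]
    rw [step1, hre, hmerge, Finset.prod_pow_eq_pow_sum]
  -- split off the k = 0 factor of the odd product
  have hDsplit : ∏ k ∈ range M, (1 - z₀^(2*k+1))^(2*k+1)
      = (∏ k ∈ range (M-1), (1 - z₀^(2*k+3))^(2*k+3)) * (1 - z₀) := by
    have h5 : ∏ k ∈ range ((M-1)+1), (1 - z₀^(2*k+1))^(2*k+1)
        = (∏ k ∈ range (M-1), (1 - z₀^(2*(k+1)+1))^(2*(k+1)+1)) * (1 - z₀^(2*0+1))^(2*0+1) :=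
      prod_range_succ' _ _
    rw [show (M-1)+1 = M by omega] at h5
    have hp : ∏ k ∈ range (M-1), (1 - z₀^(2*(k+1)+1))^(2*(k+1)+1)
        = ∏ k ∈ range (M-1), (1 - z₀^(2*k+3))^(2*k+3) :=
      prod_congr rfl fun k _ => by rw [show 2*(k+1)+1 = 2*k+3 by ring]
    rw [h5, hp]
    norm_num
  have hPden_ne : (∏ k ∈ range (M-1), (1 - z₀^(2*k+3))^(2*k+3)) ≠ 0 :=
    prod_ne_zero_iff.2 fun k hk =>
      pow_ne_zero _ (hcne _ (by omega) (by rw [mem_range] at hk; omega))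
  have h1z : (1 - z₀) ≠ 0 := by
    have h := hcne 1 (by omega) (by omega)
    simpa using h
  suffices hG : 2^M * ∏ k ∈ range (M-1), (1 - z₀^(2*k+2))^(2*k+3)
      = (-Complex.I)^(M-1) * (M:ℂ)^(M+1) * ∏ k ∈ range M, (1 - z₀^(2*k+1))^(2*k+1) by
    have hIcc : ∏ k ∈ Finset.Icc 1 (M-1), ((1 - z₀^(2*k))/(1 - z₀^(2*k+1)))^(2*k+1)
        = ∏ k ∈ range (M-1), ((1 - z₀^(2*k+2))/(1 - z₀^(2*k+3)))^(2*k+3) := by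
      rw [show Finset.Icc 1 (M-1) = Finset.Ico 1 M by rw [← Finset.Ico_add_one_right_eq_Icc]; congr 1; omega]
      rw [Finset.prod_Ico_eq_prod_range]
      refine prod_congr (by congr 1) fun k hk => ?_
      rw [show 2*(1+k) = 2*k+2 by ring, show 2*k+2+1 = 2*k+3 by omega]
    rw [hIcc]
    have hsplit2 : ∏ k ∈ range (M-1), ((1 - z₀^(2*k+2))/(1 - z₀^(2*k+3)))^(2*k+3)
        = (∏ k ∈ range (M-1), (1 - z₀^(2*k+2))^(2*k+3)) /
          ∏ k ∈ range (M-1), (1 - z₀^(2*k+3))^(2*k+3) := by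
      rw [← prod_div_distrib]; exact prod_congr rfl fun k _ => div_pow _ _ _
    rw [hsplit2]
    rw [hDsplit] at hG
    rw [div_pow]
    field_simp
    linear_combination hG
  have hnegI2 : (-Complex.I)^2 = -1 := by
    rw [pow_two]; simp [Complex.I_mul_I]
  have hnegI4 : (-Complex.I)^4 = 1 := by
    rw [show 4 = 2*2 from rfl, pow_mul, hnegI2]; norm_num
  have hmm' : ∀ j : ℕ, ((-1:ℂ))^(j*j) = (-1)^j := by
    intro j
    rcases Nat.even_or_odd j with h | h
    · rw [Even.neg_one_pow (h.mul_right j), Even.neg_one_pow h]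
    · rw [Odd.neg_one_pow (h.mul h), Odd.neg_one_pow h]
  rcases Nat.even_or_odd M with ⟨m, hm⟩ | ⟨m, hm⟩
  · -- M even, M = m + m
    subst hm
    have hm' : 1 ≤ m := by omega
    have hQne : True := trivial
    have hRe : (2:ℂ) = (∏ k ∈ range m, (1 - z₀^(2*k+1)))^2 *
        (((-1:ℂ))^m * z₀^(∑ k ∈ range m, (2*m+2*k+1))) := by
      have hsp := prod_range_add (fun k => (1 - z₀^(2*k+1))) m m
      have hs2 : ∏ k ∈ range m, (1 - z₀^(2*(m+k)+1))
          = ∏ k ∈ range m, ((-1:ℂ) * (z₀^(2*(m+m)-(2*k+1)) * (1 - z₀^(2*k+1)))) := by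
        rw [← prod_range_reflect (fun k => 1 - z₀^(2*(m+k)+1)) m]
        refine prod_congr rfl fun k hk => ?_
        rw [mem_range] at hk
        show 1 - z₀^(2*(m+(m-1-k))+1) = _
        rw [show 2*(m+(m-1-k))+1 = 2*(m+m)-(2*k+1) by omega,
          hrefl (2*k+1) (by omega)]
        ring
      have hsum1 : ∑ k ∈ range m, (2*(m+m)-(2*k+1)) = ∑ k ∈ range m, (2*m+2*k+1) := by
        rw [← sum_range_reflect (fun k => 2*m+2*k+1) m]
        exact sum_congr rfl fun k hk => by rw [mem_range] at hk; omega
      rw [hsp, hs2, prod_mul_distrib, prod_mul_distrib, prod_const, card_range,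
        Finset.prod_pow_eq_pow_sum, hsum1] at hR
      rw [← hR]; ring
    have hDe : ∏ k ∈ range (m+m), (1 - z₀^(2*k+1))^(2*k+1)
        = ((-1:ℂ))^m * z₀^(∑ k ∈ range m, (2*m+2*k+1)^2) *
          (∏ k ∈ range m, (1 - z₀^(2*k+1)))^(2*(m+m)) := by
      have hsp := prod_range_add (fun k => (1 - z₀^(2*k+1))^(2*k+1)) m m
      have hs2 : ∏ k ∈ range m, (1 - z₀^(2*(m+k)+1))^(2*(m+k)+1)
          = ∏ k ∈ range m, ((-1:ℂ) * (z₀^((2*(m+m)-(2*k+1))*(2*(m+m)-(2*k+1))) *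
              (1 - z₀^(2*k+1))^(2*(m+m)-(2*k+1)))) := by
        rw [← prod_range_reflect (fun k => (1 - z₀^(2*(m+k)+1))^(2*(m+k)+1)) m]
        refine prod_congr rfl fun k hk => ?_
        rw [mem_range] at hk
        show (1 - z₀^(2*(m+(m-1-k))+1))^(2*(m+(m-1-k))+1) = _
        rw [show 2*(m+(m-1-k))+1 = 2*(m+m)-(2*k+1) by omega,
          hrefl (2*k+1) (by omega), mul_pow, neg_pow,
          Odd.neg_one_pow ⟨m+m-k-1, by omega⟩, ← pow_mul]
        ring
      have hsum2 : ∑ k ∈ range m, ((2*(m+m)-(2*k+1))*(2*(m+m)-(2*k+1)))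
          = ∑ k ∈ range m, (2*m+2*k+1)^2 := by
        rw [← sum_range_reflect (fun k => (2*m+2*k+1)^2) m]
        refine sum_congr rfl fun k hk => ?_
        rw [mem_range] at hk
        rw [show 2*(m+m)-(2*k+1) = 2*m+2*(m-1-k)+1 by omega]
        exact (pow_two _).symm
      have hmerge : (∏ k ∈ range m, (1 - z₀^(2*k+1))^(2*k+1)) *
            ∏ k ∈ range m, (1 - z₀^(2*k+1))^(2*(m+m)-(2*k+1))
          = (∏ k ∈ range m, (1 - z₀^(2*k+1)))^(2*(m+m)) := by
        rw [← prod_pow, ← prod_mul_distrib]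
        refine prod_congr rfl fun k hk => ?_
        rw [mem_range] at hk
        rw [← pow_add, show (2*k+1) + (2*(m+m)-(2*k+1)) = 2*(m+m) by omega]
      rw [hsp, hs2, prod_mul_distrib, prod_mul_distrib, prod_const, card_range,
        Finset.prod_pow_eq_pow_sum, hsum2, ← hmerge]
      ring
    have hkey : (∑ k ∈ range m, (2*m+2*k+1)) * (m+m) + (∑ k ∈ range (m+m-1), (k+1)*(2*k+3))
        = (∑ k ∈ range m, (2*m+2*k+1)^2) + (m+m)*(m*(m-1)) := by
      have h6 : 6*((∑ k ∈ range m, (2*m+2*k+1)) * (m+m) + (∑ k ∈ range (m+m-1), (k+1)*(2*k+3)))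
          = 6*((∑ k ∈ range m, (2*m+2*k+1)^2) + (m+m)*(m*(m-1))) := by
        have hv1 := sum1 (2*m) m
        have hv2 := sum2 (2*m) m
        have hv3 := sum3 (m+m-1)
        rw [Nat.cast_sub (by omega : 1 ≤ m+m)] at hv3
        zify [hm', (by omega : 1 ≤ m+m)]
        push_cast at hv1 hv2 hv3 ⊢
        linear_combination (12*(m:ℤ))*hv1 + hv3 - 2*hv2
      omega
    have hEmm : Even (m*(m-1)) := by
      rcases Nat.even_or_odd m with h | h
      · exact h.mul_right _
      · exact (Nat.Odd.sub_odd h odd_one).mul_left _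
    have hzkey : (z₀^(∑ k ∈ range m, (2*m+2*k+1)))^(m+m) *
          z₀^(∑ k ∈ range (m+m-1), (k+1)*(2*k+3))
        = z₀^(∑ k ∈ range m, (2*m+2*k+1)^2) := by
      rw [← pow_mul, ← pow_add, hkey, pow_add, pow_mul, hzM, Even.neg_one_pow hEmm, mul_one]
    have key1 : ((-1:ℂ))^(m*(m+m)) = 1 := Even.neg_one_pow ⟨m*m, by ring⟩
    have key3 : (-Complex.I)^((m+m-1)*((m+m)+1)) = (-Complex.I)^(m+m-1) * ((-1:ℂ))^m := by
      rw [show (m+m-1)*((m+m)+1) = (m+m-1) + (2*m + 4*(m*(m-1))) by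
          zify [hm', (by omega : 1 ≤ m+m)]; ring]
      rw [pow_add, pow_add, pow_mul, pow_mul, hnegI2, hnegI4, one_pow, mul_one]
    calc 2^(m+m) * ∏ k ∈ range (m+m-1), (1 - z₀^(2*k+2))^(2*k+3)
        = 2^(m+m) * ((z₀^(∑ k ∈ range (m+m-1), (k+1)*(2*k+3))) *
            (∏ j ∈ range (m+m-1), (1 - z₀^(j+1)))^(2*(m+m)+2)) := by rw [hE1]
      _ = ((∏ k ∈ range m, (1 - z₀^(2*k+1)))^2 *
            (((-1:ℂ))^m * z₀^(∑ k ∈ range m, (2*m+2*k+1))))^(m+m) *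
          ((z₀^(∑ k ∈ range (m+m-1), (k+1)*(2*k+3))) *
            ((↑(m+m) * (-Complex.I)^(m+m-1))^((m+m)+1))) := by
          rw [show 2*(m+m)+2 = 2*((m+m)+1) by ring, pow_mul, hE2, ← hRe]
      _ = ((-1:ℂ))^(m*(m+m)) *
          ((z₀^(∑ k ∈ range m, (2*m+2*k+1)))^(m+m) *
            z₀^(∑ k ∈ range (m+m-1), (k+1)*(2*k+3))) *
          ((∏ k ∈ range m, (1 - z₀^(2*k+1)))^(2*(m+m)) *
            (((m+m : ℕ):ℂ)^((m+m)+1) * (-Complex.I)^((m+m-1)*((m+m)+1)))) := by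
          push_cast
          ring
      _ = (-Complex.I)^(m+m-1) * ((m+m : ℕ):ℂ)^((m+m)+1) *
          (((-1:ℂ))^m * z₀^(∑ k ∈ range m, (2*m+2*k+1)^2) *
            (∏ k ∈ range m, (1 - z₀^(2*k+1)))^(2*(m+m))) := by
          rw [key1, hzkey, key3]; ring
      _ = (-Complex.I)^(m+m-1) * ((m+m : ℕ):ℂ)^((m+m)+1) *
          ∏ k ∈ range (m+m), (1 - z₀^(2*k+1))^(2*k+1) := by rw [hDe]
  · -- M odd, M = 2*m+1
    subst hm
    have hRo : (1:ℂ) = (∏ k ∈ range m, (1 - z₀^(2*k+1)))^2 *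
        (((-1:ℂ))^m * z₀^(∑ k ∈ range m, (2*m+2+2*k+1))) := by
      have h0 : ∏ k ∈ range (2*m+1), (1 - z₀^(2*k+1))
          = ∏ k ∈ range (m+(m+1)), (1 - z₀^(2*k+1)) := by
        rw [show 2*m+1 = m+(m+1) by omega]
      have hsp := prod_range_add (fun k => (1 - z₀^(2*k+1))) m (m+1)
      have hs1 : ∏ k ∈ range (m+1), (1 - z₀^(2*(m+k)+1))
          = (∏ k ∈ range m, (1 - z₀^(2*(m+(k+1))+1))) * (1 - z₀^(2*(m+0)+1)) :=
        prod_range_succ' _ _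
      have hs2 : ∏ k ∈ range m, (1 - z₀^(2*(m+(k+1))+1))
          = ∏ k ∈ range m, ((-1:ℂ) * (z₀^(2*(2*m+1)-(2*k+1)) * (1 - z₀^(2*k+1)))) := by
        rw [← prod_range_reflect (fun k => (1 - z₀^(2*(m+(k+1))+1))) m]
        refine prod_congr rfl fun k hk => ?_
        rw [mem_range] at hk
        show 1 - z₀^(2*(m+((m-1-k)+1))+1) = _
        rw [show 2*(m+((m-1-k)+1))+1 = 2*(2*m+1)-(2*k+1) by omega,
          hrefl (2*k+1) (by omega)]
        ring
      have hsum1 : ∑ k ∈ range m, (2*(2*m+1)-(2*k+1)) = ∑ k ∈ range m, (2*m+2+2*k+1) := by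
        rw [← sum_range_reflect (fun k => 2*m+2+2*k+1) m]
        exact sum_congr rfl fun k hk => by rw [mem_range] at hk; omega
      rw [h0, hsp, hs1, hs2, prod_mul_distrib, prod_mul_distrib, prod_const, card_range,
        Finset.prod_pow_eq_pow_sum, hsum1, show 2*(m+0)+1 = 2*m+1 by omega, hcM] at hR
      have h2 : (2:ℂ) * ((∏ k ∈ range m, (1 - z₀^(2*k+1)))^2 *
          (((-1:ℂ))^m * z₀^(∑ k ∈ range m, (2*m+2+2*k+1)))) = 2 * 1 := by
        linear_combination hR
      exact (mul_left_cancel₀ two_ne_zero h2).symm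
    have hDo : ∏ k ∈ range (2*m+1), (1 - z₀^(2*k+1))^(2*k+1)
        = 2^(2*m+1) * (((-1:ℂ))^m * z₀^(∑ k ∈ range m, (2*m+2+2*k+1)^2) *
          (∏ k ∈ range m, (1 - z₀^(2*k+1)))^(2*(2*m+1))) := by
      have h0 : ∏ k ∈ range (2*m+1), (1 - z₀^(2*k+1))^(2*k+1)
          = ∏ k ∈ range (m+(m+1)), (1 - z₀^(2*k+1))^(2*k+1) := by
        rw [show 2*m+1 = m+(m+1) by omega]
      have hsp := prod_range_add (fun k => (1 - z₀^(2*k+1))^(2*k+1)) m (m+1)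
      have hs1 : ∏ k ∈ range (m+1), (1 - z₀^(2*(m+k)+1))^(2*(m+k)+1)
          = (∏ k ∈ range m, (1 - z₀^(2*(m+(k+1))+1))^(2*(m+(k+1))+1)) *
            (1 - z₀^(2*(m+0)+1))^(2*(m+0)+1) :=
        prod_range_succ' _ _
      have hs2 : ∏ k ∈ range m, (1 - z₀^(2*(m+(k+1))+1))^(2*(m+(k+1))+1)
          = ∏ k ∈ range m, ((-1:ℂ) * (z₀^((2*(2*m+1)-(2*k+1))*(2*(2*m+1)-(2*k+1))) *
              (1 - z₀^(2*k+1))^(2*(2*m+1)-(2*k+1)))) := by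
        rw [← prod_range_reflect
          (fun k => (1 - z₀^(2*(m+(k+1))+1))^(2*(m+(k+1))+1)) m]
        refine prod_congr rfl fun k hk => ?_
        rw [mem_range] at hk
        show (1 - z₀^(2*(m+((m-1-k)+1))+1))^(2*(m+((m-1-k)+1))+1) = _
        rw [show 2*(m+((m-1-k)+1))+1 = 2*(2*m+1)-(2*k+1) by omega,
          hrefl (2*k+1) (by omega), mul_pow, neg_pow,
          Odd.neg_one_pow ⟨2*m-k, by omega⟩, ← pow_mul]
        ring
      have hsum2 : ∑ k ∈ range m, ((2*(2*m+1)-(2*k+1))*(2*(2*m+1)-(2*k+1)))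
          = ∑ k ∈ range m, (2*m+2+2*k+1)^2 := by
        rw [← sum_range_reflect (fun k => (2*m+2+2*k+1)^2) m]
        refine sum_congr rfl fun k hk => ?_
        rw [mem_range] at hk
        rw [show 2*(2*m+1)-(2*k+1) = 2*m+2+2*(m-1-k)+1 by omega]
        exact (pow_two _).symm
      have hmerge : (∏ k ∈ range m, (1 - z₀^(2*k+1))^(2*k+1)) *
            ∏ k ∈ range m, (1 - z₀^(2*k+1))^(2*(2*m+1)-(2*k+1))
          = (∏ k ∈ range m, (1 - z₀^(2*k+1)))^(2*(2*m+1)) := by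
        rw [← prod_pow, ← prod_mul_distrib]
        refine prod_congr rfl fun k hk => ?_
        rw [mem_range] at hk
        rw [← pow_add, show (2*k+1) + (2*(2*m+1)-(2*k+1)) = 2*(2*m+1) by omega]
      rw [h0, hsp, hs1, hs2, prod_mul_distrib, prod_mul_distrib, prod_const, card_range,
        Finset.prod_pow_eq_pow_sum, hsum2, show 2*(m+0)+1 = 2*m+1 by omega, hcM,
        ← hmerge]
      ring
    have hkeyO : (∑ k ∈ range m, (2*m+2+2*k+1)) * (2*m+1) +
          (∑ k ∈ range (2*m+1-1), (k+1)*(2*k+3))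
        = (∑ k ∈ range m, (2*m+2+2*k+1)^2) + (2*m+1)*(m*m) := by
      have h6 : 6*((∑ k ∈ range m, (2*m+2+2*k+1)) * (2*m+1) +
            (∑ k ∈ range (2*m+1-1), (k+1)*(2*k+3)))
          = 6*((∑ k ∈ range m, (2*m+2+2*k+1)^2) + (2*m+1)*(m*m)) := by
        have hv1 := sum1 (2*m+2) m
        have hv2 := sum2 (2*m+2) m
        have hv3 := sum3 (2*m+1-1)
        rw [show 2*m+1-1 = 2*m by omega] at hv3 ⊢
        zify
        push_cast at hv1 hv2 hv3 ⊢
        linear_combination (6*(2*(m:ℤ)+1))*hv1 + hv3 - 2*hv2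
      omega
    have hzkeyO : (z₀^(∑ k ∈ range m, (2*m+2+2*k+1)))^(2*m+1) *
          z₀^(∑ k ∈ range (2*m+1-1), (k+1)*(2*k+3))
        = ((-1:ℂ))^m * z₀^(∑ k ∈ range m, (2*m+2+2*k+1)^2) := by
      rw [← pow_mul, ← pow_add, hkeyO, pow_add, pow_mul, hzM, hmm' m]
      ring
    have keyO1 : ((-1:ℂ))^(m*(2*m+1)) * ((-1:ℂ))^(m*(2*m+1)) = 1 := by
      rw [← pow_add]
      exact Even.neg_one_pow ⟨m*(2*m+1), rfl⟩
    have keyO3 : (-Complex.I)^((2*m+1-1)*((2*m+1)+1))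
        = (-Complex.I)^(2*m+1-1) * ((-1:ℂ))^(m*(2*m+1)) := by
      rw [show (2*m+1-1)*((2*m+1)+1) = (2*m+1-1) + 2*(m*(2*m+1)) by
          rw [show 2*m+1-1 = 2*m by omega]; ring]
      rw [pow_add, pow_mul, hnegI2]
    calc 2^(2*m+1) * ∏ k ∈ range (2*m+1-1), (1 - z₀^(2*k+2))^(2*k+3)
        = 2^(2*m+1) * ((z₀^(∑ k ∈ range (2*m+1-1), (k+1)*(2*k+3))) *
            (∏ j ∈ range (2*m+1-1), (1 - z₀^(j+1)))^(2*(2*m+1)+2)) := by rw [hE1]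
      _ = 2^(2*m+1) * ((z₀^(∑ k ∈ range (2*m+1-1), (k+1)*(2*k+3))) *
            ((↑(2*m+1) * (-Complex.I)^(2*m+1-1))^((2*m+1)+1))) *
          ((∏ k ∈ range m, (1 - z₀^(2*k+1)))^2 *
            (((-1:ℂ))^m * z₀^(∑ k ∈ range m, (2*m+2+2*k+1))))^(2*m+1) := by
          rw [show 2*(2*m+1)+2 = 2*((2*m+1)+1) by ring, pow_mul, hE2, ← hRo, one_pow, mul_one]
      _ = (((-1:ℂ))^(m*(2*m+1)) * (-Complex.I)^((2*m+1-1)*((2*m+1)+1))) *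
          (((z₀^(∑ k ∈ range m, (2*m+2+2*k+1)))^(2*m+1) *
            z₀^(∑ k ∈ range (2*m+1-1), (k+1)*(2*k+3))) *
          (((2*m+1 : ℕ):ℂ)^((2*m+1)+1) *
            ((∏ k ∈ range m, (1 - z₀^(2*k+1)))^(2*(2*m+1)) * 2^(2*m+1)))) := by
          rw [mul_pow]
          push_cast
          ring
      _ = (((-1:ℂ))^(m*(2*m+1)) * ((-1:ℂ))^(m*(2*m+1))) *
          ((-Complex.I)^(2*m+1-1) *
          (((z₀^(∑ k ∈ range m, (2*m+2+2*k+1)))^(2*m+1) *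
            z₀^(∑ k ∈ range (2*m+1-1), (k+1)*(2*k+3))) *
          (((2*m+1 : ℕ):ℂ)^((2*m+1)+1) *
            ((∏ k ∈ range m, (1 - z₀^(2*k+1)))^(2*(2*m+1)) * 2^(2*m+1))))) := by
          rw [keyO3]; ring
      _ = (-Complex.I)^(2*m+1-1) * ((2*m+1 : ℕ):ℂ)^((2*m+1)+1) *
          (2^(2*m+1) * (((-1:ℂ))^m * z₀^(∑ k ∈ range m, (2*m+2+2*k+1)^2) *
            (∏ k ∈ range m, (1 - z₀^(2*k+1)))^(2*(2*m+1)))) := by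
          rw [keyO1, hzkeyO, one_mul]; ring
      _ = (-Complex.I)^(2*m+1-1) * ((2*m+1 : ℕ):ℂ)^((2*m+1)+1) *
          ∏ k ∈ range (2*m+1), (1 - z₀^(2*k+1))^(2*k+1) := by rw [hDo]
end

section
/- Let M ≥ 1 be an integer, z₀ = exp(iπ/M), and let p be an integer with |p| ≤ M/2, α = z₀^(2p). Define v(k) = #{x ∈ ℤ : |x| ≤ k and x ≡ p (mod M)} for 0 ≤ k ≤ M-1. Then ∏_{k=1}^{M-1}(1 - z₀^(2k))^(v(k)) / ∏_{k=0}^{M-1}(1 - z₀^(2k+1))^(v(k)) equals M/2 if α = 1, and equals ±z₀^(-p)·(1 - α)·(M/2) if α ≠ 1 (i.e., the quotient equals z₀^(-p)(1-z₀^(2p))·(M/2) up to sign). -/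
open Complex

section Aux

open Finset

private lemma stmt7.lemA (M : ℕ) (z₀ : ℂ) (hω : IsPrimitiveRoot (z₀^2) M) (hM : 1 ≤ M) :
    ∏ k ∈ Finset.Icc 1 (M-1), (1 - z₀^(2*k)) = M := by
  obtain ⟨m, rfl⟩ : ∃ m, M = m + 1 := ⟨M - 1, by omega⟩
  have h := hω.prod_one_sub_pow_eq_order
  rw [Nat.add_sub_cancel, ← Finset.Ico_add_one_right_eq_Icc, Finset.prod_Ico_eq_prod_range]
  calc ∏ i ∈ range (m + 1 - 1), (1 - z₀^(2*(1+i)))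
      = ∏ i ∈ range m, (1 - (z₀^2)^(i+1)) := by
        rw [Nat.add_sub_cancel]
        refine prod_congr rfl fun i _ => ?_
        rw [← pow_mul]; ring_nf
    _ = m + 1 := h
    _ = ((m+1 : ℕ) : ℂ) := by push_cast; ring

private lemma stmt7.lemB (M : ℕ) (z₀ : ℂ) (hω : IsPrimitiveRoot (z₀^2) M) (hM : 1 ≤ M)
    (hzM : z₀^M = -1) :
    ∏ k ∈ Finset.range M, (1 - z₀^(2*k+1)) = 2 := by
  have h := X_pow_sub_C_eq_prod hω (by omega : 0 < M) hzM
  have h1 := congrArg (Polynomial.eval 1) h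
  simp only [Polynomial.eval_sub, Polynomial.eval_pow, Polynomial.eval_X, Polynomial.eval_C,
    Polynomial.eval_prod, Polynomial.eval_mul, one_pow] at h1
  rw [show ∏ k ∈ Finset.range M, (1 - z₀^(2*k+1)) = ∏ i ∈ range M, (1 - (z₀^2)^i * z₀) from
    prod_congr rfl fun i _ => by rw [← pow_mul, ← pow_succ], ← h1]
  norm_num

private lemma stmt7.prodind (s : Finset ℕ) (c : ℕ → Prop) [DecidablePred c] (f : ℕ → ℂ) :
    ∏ k ∈ s, f k ^ (if c k then 1 else 0) = ∏ k ∈ s.filter c, f k := by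
  rw [Finset.prod_filter]
  refine Finset.prod_congr rfl fun k _ => ?_
  split <;> simp

private lemma stmt7.reflect (M q : ℕ) (hq1 : 1 ≤ q) (hqM : q < M) (f : ℕ → ℂ) :
    ∏ k ∈ Finset.Icc (M - q) (M - 1), f k = ∏ j ∈ Finset.Icc 1 q, f (M - j) := by
  refine Finset.prod_nbij' (fun k => M - k) (fun j => M - j) ?_ ?_ ?_ ?_ ?_ <;>
    simp only [Finset.mem_Icc] <;> intro a ha
  · omega
  · omega
  · omega
  · omega
  · congr 1; omega

private lemma stmt7.shift (q : ℕ) (f : ℕ → ℂ) :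
    ∏ j ∈ Finset.Icc 1 q, f (j-1) = ∏ k ∈ Finset.range q, f k := by
  refine Finset.prod_nbij' (fun j => j - 1) (fun k => k + 1) ?_ ?_ ?_ ?_ ?_ <;>
    simp only [Finset.mem_Icc, Finset.mem_range] <;> intro a ha
  · omega
  · omega
  · omega
  · omega
  · trivial

private lemma stmt7.lemAux (M q : ℕ) (hM : 1 ≤ M) (hq1 : 1 ≤ q) (hq : 2*q ≤ M) (z₀ : ℂ)
    (hz0 : z₀ ≠ 0)
    (h2M : z₀^(2*M) = 1) (hzM : z₀^M = -1) (hω : IsPrimitiveRoot (z₀^2) M)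
    (hne : ∀ j : ℕ, 0 < j → j < 2*M → z₀^j ≠ 1) :
    (∏ k ∈ Finset.Icc 1 (M-1), (1 - z₀^(2*k)) ^ ((if q ≤ k then 1 else 0) + (if M - q ≤ k then 1 else 0))) /
    (∏ k ∈ Finset.range M, (1 - z₀^(2*k+1)) ^ ((if q ≤ k then 1 else 0) + (if M - q ≤ k then 1 else 0)))
    = z₀^(-(q:ℤ)) * (1 - z₀^(2*q)) * ((M:ℂ)/2) := by
  have hqM : q < M := by omega
  set f : ℕ → ℂ := fun k => 1 - z₀^(2*k) with hf
  set g : ℕ → ℂ := fun k => 1 - z₀^(2*k+1) with hg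
  have e1 : (Finset.Icc 1 (M-1)).filter (fun k => q ≤ k) = Finset.Icc q (M-1) := by
    ext x; simp only [Finset.mem_filter, Finset.mem_Icc]; omega
  have e2 : (Finset.Icc 1 (M-1)).filter (fun k => M - q ≤ k) = Finset.Icc (M-q) (M-1) := by
    ext x; simp only [Finset.mem_filter, Finset.mem_Icc]; omega
  have e3 : (Finset.range M).filter (fun k => q ≤ k) = Finset.Icc q (M-1) := by
    ext x; simp only [Finset.mem_filter, Finset.mem_Icc, Finset.mem_range]; omega
  have e4 : (Finset.range M).filter (fun k => M - q ≤ k) = Finset.Icc (M-q) (M-1) := by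
    ext x; simp only [Finset.mem_filter, Finset.mem_Icc, Finset.mem_range]; omega
  have hN : (∏ k ∈ Finset.Icc 1 (M-1), f k ^ ((if q ≤ k then 1 else 0) + (if M - q ≤ k then 1 else 0)))
      = (∏ k ∈ Finset.Icc q (M-1), f k) * ∏ k ∈ Finset.Icc (M-q) (M-1), f k := by
    simp only [pow_add]
    rw [Finset.prod_mul_distrib, stmt7.prodind, stmt7.prodind, e1, e2]
  have hD : (∏ k ∈ Finset.range M, g k ^ ((if q ≤ k then 1 else 0) + (if M - q ≤ k then 1 else 0)))
      = (∏ k ∈ Finset.Icc q (M-1), g k) * ∏ k ∈ Finset.Icc (M-q) (M-1), g k := by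
    simp only [pow_add]
    rw [Finset.prod_mul_distrib, stmt7.prodind, stmt7.prodind, e3, e4]
  have hP2 : ∏ k ∈ Finset.Icc (M-q) (M-1), f k
      = (∏ j ∈ Finset.Icc 1 q, (-(z₀^(2*j))⁻¹)) * ∏ j ∈ Finset.Icc 1 q, f j := by
    rw [stmt7.reflect M q hq1 hqM, ← Finset.prod_mul_distrib]
    refine Finset.prod_congr rfl fun j hj => ?_
    simp only [Finset.mem_Icc] at hj
    have hu0 : z₀^(2*j) ≠ 0 := pow_ne_zero _ hz0
    have hu : z₀^(2*(M-j)) * z₀^(2*j) = 1 := by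
      rw [← pow_add, show 2*(M-j)+2*j = 2*M by omega, h2M]
    have hinv : z₀^(2*(M-j)) = (z₀^(2*j))⁻¹ := by
      field_simp
      linear_combination hu
    simp only [hf]
    rw [← hinv]
    linear_combination -hu
  have hQ2 : ∏ k ∈ Finset.Icc (M-q) (M-1), g k
      = (∏ j ∈ Finset.Icc 1 q, (-(z₀ * (z₀^(2*j))⁻¹))) * ∏ k ∈ Finset.range q, g k := by
    rw [stmt7.reflect M q hq1 hqM, ← stmt7.shift q g, ← Finset.prod_mul_distrib]
    refine Finset.prod_congr rfl fun j hj => ?_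
    simp only [Finset.mem_Icc] at hj
    have hu0 : z₀^(2*j) ≠ 0 := pow_ne_zero _ hz0
    have hu : z₀^(2*(M-j)+1) * z₀^(2*j) = z₀ := by
      rw [← pow_add, show 2*(M-j)+1+2*j = 2*M+1 by omega, pow_succ, h2M, one_mul]
    have hinv : z₀^(2*(M-j)+1) = z₀ * (z₀^(2*j))⁻¹ := by
      field_simp
      linear_combination hu
    have h2 : z₀ * z₀^(2*(j-1)+1) = z₀^(2*j) := by
      rw [← pow_succ']
      congr 1
      omega
    have haw : z₀^(2*(M-j)+1) * z₀^(2*(j-1)+1) = 1 := by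
      rw [← pow_add, show 2*(M-j)+1+(2*(j-1)+1) = 2*M by omega, h2M]
    simp only [hg]
    rw [← hinv]
    linear_combination -haw
  have hA : ∏ k ∈ Finset.Icc 1 (M-1), f k = M := stmt7.lemA M z₀ hω hM
  have hB : ∏ k ∈ Finset.range M, g k = 2 := stmt7.lemB M z₀ hω hM hzM
  have hAA : (∏ k ∈ Finset.Icc 1 (q-1), f k) * ∏ k ∈ Finset.Icc q (M-1), f k = (M : ℂ) := by
    rw [← hA, ← Finset.prod_union (by
      rw [Finset.disjoint_left]
      intro a ha hb
      simp only [Finset.mem_Icc] at ha hb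
      omega)]
    congr 1
    ext x
    simp only [Finset.mem_union, Finset.mem_Icc]
    omega
  have hBB : (∏ k ∈ Finset.range q, g k) * ∏ k ∈ Finset.Icc q (M-1), g k = (2 : ℂ) := by
    rw [← hB, ← Finset.prod_union (by
      rw [Finset.disjoint_left]
      intro a ha hb
      simp only [Finset.mem_range, Finset.mem_Icc] at ha hb
      omega)]
    congr 1
    ext x
    simp only [Finset.mem_union, Finset.mem_Icc, Finset.mem_range]
    omega
  have hfq : ∏ j ∈ Finset.Icc 1 q, f j = (∏ k ∈ Finset.Icc 1 (q-1), f k) * f q := by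
    have h := Finset.prod_Icc_succ_top (show 1 ≤ (q-1)+1 by omega) f
    rw [show (q-1)+1 = q from by omega] at h
    exact h
  have hST : (∏ j ∈ Finset.Icc 1 q, (-(z₀^(2*j))⁻¹))
      = (∏ j ∈ Finset.Icc 1 q, (-(z₀ * (z₀^(2*j))⁻¹))) * (z₀^(-(q:ℤ))) := by
    have hc : z₀^(-(q:ℤ)) = ∏ _j ∈ Finset.Icc 1 q, z₀⁻¹ := by
      rw [Finset.prod_const, Nat.card_Icc, zpow_neg, zpow_natCast, inv_pow]
      norm_num
    rw [hc, ← Finset.prod_mul_distrib]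
    refine Finset.prod_congr rfl fun j hj => ?_
    have hu0 : z₀^(2*j) ≠ 0 := pow_ne_zero _ hz0
    field_simp
  have hT2ne : (∏ j ∈ Finset.Icc 1 q, (-(z₀ * (z₀^(2*j))⁻¹))) ≠ 0 := by
    refine Finset.prod_ne_zero_iff.mpr fun j hj => ?_
    exact neg_ne_zero.mpr (mul_ne_zero hz0 (inv_ne_zero (pow_ne_zero _ hz0)))
  have hgne : ∀ k, k < M → g k ≠ 0 := by
    intro k hk
    have : z₀^(2*k+1) ≠ 1 := hne (2*k+1) (by omega) (by omega)
    simp only [hg]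
    exact sub_ne_zero_of_ne (Ne.symm this)
  have hQ1ne : (∏ k ∈ Finset.Icc q (M-1), g k) ≠ 0 := by
    refine Finset.prod_ne_zero_iff.mpr fun k hk => ?_
    simp only [Finset.mem_Icc] at hk
    exact hgne k (by omega)
  have hRqne : (∏ k ∈ Finset.range q, g k) ≠ 0 := by
    refine Finset.prod_ne_zero_iff.mpr fun k hk => ?_
    simp only [Finset.mem_range] at hk
    exact hgne k (by omega)
  rw [hN, hD, hP2, hQ2, hfq, hST]
  rw [div_eq_iff (by
    exact mul_ne_zero hQ1ne (mul_ne_zero hT2ne hRqne))]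
  have hfqv : f q = 1 - z₀^(2*q) := rfl
  rw [hfqv] at *
  linear_combination ((∏ j ∈ Finset.Icc 1 q, (-(z₀ * (z₀^(2*j))⁻¹))) * z₀^(-(q:ℤ)) * (1 - z₀^(2*q))) * hAA
    - (z₀^(-(q:ℤ)) * (1 - z₀^(2*q)) * ((M:ℂ)/2) * (∏ j ∈ Finset.Icc 1 q, (-(z₀ * (z₀^(2*j))⁻¹)))) * hBB

private lemma stmt7.vcard (M : ℕ) (hM : 1 ≤ M) (p : ℤ) (hp : 2 * |p| ≤ (M : ℤ)) (k : ℕ)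
    (hk : k < M) :
    ((Finset.Icc (-(k : ℤ)) (k : ℤ)).filter fun x => (x - p) % (M : ℤ) = 0).card
      = (if p.natAbs ≤ k then 1 else 0) + (if M - p.natAbs ≤ k then 1 else 0) := by
  set q := p.natAbs with hqd
  have hqabs : (q : ℤ) = |p| := (Int.abs_eq_natAbs p).symm
  set p' : ℤ := if 0 ≤ p then p - M else p + M with hp'
  have hiff : ∀ x : ℤ, x ∈ ((Finset.Icc (-(k : ℤ)) (k : ℤ)).filter fun x => (x - p) % (M : ℤ) = 0)
      ↔ (q ≤ k ∧ x = p) ∨ (M - q ≤ k ∧ x = p') := by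
    intro x
    simp only [Finset.mem_filter, Finset.mem_Icc]
    constructor
    · rintro ⟨⟨h1, h2⟩, hmod⟩
      obtain ⟨t, ht⟩ := Int.dvd_of_emod_eq_zero hmod
      have hb1 : (M : ℤ) * t < M * 2 := by rw [← ht]; omega
      have hb2 : (M : ℤ) * (-2) < M * t := by rw [← ht]; omega
      have hM0 : (0 : ℤ) < M := by exact_mod_cast hM
      have ht2 : t < 2 := lt_of_mul_lt_mul_left hb1 (by omega)
      have ht2' : (-2 : ℤ) < t := lt_of_mul_lt_mul_left hb2 (by omega)
      interval_cases t <;> rw [hp'] <;> split_ifs <;> omega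
    · rintro (⟨h1, rfl⟩ | ⟨h1, rfl⟩)
      · exact ⟨⟨by omega, by omega⟩, Int.emod_eq_zero_of_dvd ⟨0, by ring⟩⟩
      · rw [hp']; split_ifs with hs
        · exact ⟨⟨by omega, by omega⟩, Int.emod_eq_zero_of_dvd ⟨-1, by ring⟩⟩
        · exact ⟨⟨by omega, by omega⟩, Int.emod_eq_zero_of_dvd ⟨1, by ring⟩⟩
  have hne : p ≠ p' := by rw [hp']; split_ifs <;> omega
  have hset : ((Finset.Icc (-(k : ℤ)) (k : ℤ)).filter fun x => (x - p) % (M : ℤ) = 0)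
      = (if q ≤ k then ({p} : Finset ℤ) else ∅) ∪ (if M - q ≤ k then {p'} else ∅) := by
    ext x
    rw [hiff x]
    split_ifs <;> simp_all
  rw [hset]
  split_ifs with h1 h2 h2
  · rw [Finset.card_union_of_disjoint (by simp [hne, Ne.symm hne])]; simp
  · simp
  · simp
  · simp

end Aux

/-- For `M ≥ 1`, `z₀ = e^{iπ/M}`, `p ∈ ℤ` with `|p| ≤ M/2`, `α = z₀^{2p}`
and `v(k) = #{x ∈ ℤ : |x| ≤ k, x ≡ p (mod M)}`, the quotient
`∏_{k=1}^{M-1}(1-z₀^{2k})^{v(k)} / ∏_{k=0}^{M-1}(1-z₀^{2k+1})^{v(k)}`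
equals `M/2` if `α = 1`, and equals `±z₀^{-p}(1-α)·(M/2)` if `α ≠ 1`. -/
theorem stmt7 (M : ℕ) (hM : 1 ≤ M) (z₀ : ℂ)
    (hz : z₀ = Complex.exp (Real.pi * Complex.I / M))
    (p : ℤ) (hp : 2 * |p| ≤ (M : ℤ)) (α : ℂ) (hα : α = z₀ ^ (2 * p))
    (v : ℕ → ℕ)
    (hv : ∀ k : ℕ, v k =
      ((Finset.Icc (-(k : ℤ)) (k : ℤ)).filter fun x => (x - p) % (M : ℤ) = 0).card) :
    (α = 1 →
      (∏ k ∈ Finset.Icc 1 (M - 1), (1 - z₀ ^ (2 * k)) ^ v k) /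
          (∏ k ∈ Finset.range M, (1 - z₀ ^ (2 * k + 1)) ^ v k) = (M : ℂ) / 2) ∧
    (α ≠ 1 →
      (∏ k ∈ Finset.Icc 1 (M - 1), (1 - z₀ ^ (2 * k)) ^ v k) /
            (∏ k ∈ Finset.range M, (1 - z₀ ^ (2 * k + 1)) ^ v k) =
          z₀ ^ (-p) * (1 - α) * ((M : ℂ) / 2) ∨
      (∏ k ∈ Finset.Icc 1 (M - 1), (1 - z₀ ^ (2 * k)) ^ v k) /
            (∏ k ∈ Finset.range M, (1 - z₀ ^ (2 * k + 1)) ^ v k) =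
          -(z₀ ^ (-p) * (1 - α) * ((M : ℂ) / 2))) := by
  have hM0 : (M : ℂ) ≠ 0 := Nat.cast_ne_zero.mpr (by omega)
  have hz0 : z₀ ≠ 0 := by rw [hz]; exact Complex.exp_ne_zero _
  have hprim : IsPrimitiveRoot z₀ (2*M) := by
    have h : z₀ = Complex.exp (2 * Real.pi * Complex.I / ((2*M : ℕ) : ℂ)) := by
      rw [hz]; congr 1; push_cast; field_simp
    rw [h]
    exact Complex.isPrimitiveRoot_exp _ (by omega)
  have hzM : z₀ ^ M = -1 := by
    rw [hz, ← Complex.exp_nat_mul, show (M:ℂ) * (Real.pi * Complex.I / M) = Real.pi * Complex.I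
      from by field_simp]
    exact Complex.exp_pi_mul_I
  have h2M : z₀ ^ (2*M) = 1 := by rw [mul_comm, pow_mul, hzM]; norm_num
  have hω : IsPrimitiveRoot (z₀^2) M := IsPrimitiveRoot.pow (by omega) hprim (by ring)
  have hne : ∀ j : ℕ, 0 < j → j < 2*M → z₀^j ≠ 1 :=
    fun j h1 h2 => hprim.pow_ne_one_of_pos_of_lt h1.ne' h2
  set q := p.natAbs with hqd
  have hqabs : (q : ℤ) = |p| := (Int.abs_eq_natAbs p).symm
  have hvf : ∀ k : ℕ, k < M →
      v k = (if q ≤ k then 1 else 0) + (if M - q ≤ k then 1 else 0) := by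
    intro k hk
    rw [hv k]
    exact stmt7.vcard M hM p hp k hk
  by_cases hq0 : q = 0
  · have hp0 : p = 0 := Int.natAbs_eq_zero.mp hq0
    have hα1 : α = 1 := by rw [hα, hp0]; norm_num
    refine ⟨fun _ => ?_, fun h => absurd hα1 h⟩
    have hNum : ∏ k ∈ Finset.Icc 1 (M-1), (1 - z₀^(2*k))^(v k)
        = ∏ k ∈ Finset.Icc 1 (M-1), (1 - z₀^(2*k)) := by
      refine Finset.prod_congr rfl fun k hk => ?_
      simp only [Finset.mem_Icc] at hk
      rw [hvf k (by omega), if_pos (by omega), if_neg (by omega)]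
      norm_num
    have hDen : ∏ k ∈ Finset.range M, (1 - z₀^(2*k+1))^(v k)
        = ∏ k ∈ Finset.range M, (1 - z₀^(2*k+1)) := by
      refine Finset.prod_congr rfl fun k hk => ?_
      simp only [Finset.mem_range] at hk
      rw [hvf k hk, if_pos (by omega), if_neg (by omega)]
      norm_num
    rw [hNum, hDen, stmt7.lemA M z₀ hω hM, stmt7.lemB M z₀ hω hM hzM]
  · have hq1 : 1 ≤ q := by omega
    have h2q : 2*q ≤ M := by
      have h := hp
      rw [← hqabs] at h
      exact_mod_cast h
    have key : (∏ k ∈ Finset.Icc 1 (M - 1), (1 - z₀ ^ (2 * k)) ^ v k) /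
        (∏ k ∈ Finset.range M, (1 - z₀ ^ (2 * k + 1)) ^ v k)
        = z₀^(-(q:ℤ)) * (1 - z₀^(2*q)) * ((M:ℂ)/2) := by
      have hNum : ∏ k ∈ Finset.Icc 1 (M-1), (1 - z₀^(2*k))^(v k)
          = ∏ k ∈ Finset.Icc 1 (M-1),
              (1 - z₀^(2*k))^((if q ≤ k then 1 else 0) + (if M - q ≤ k then 1 else 0)) := by
        refine Finset.prod_congr rfl fun k hk => ?_
        simp only [Finset.mem_Icc] at hk
        rw [hvf k (by omega)]
      have hDen : ∏ k ∈ Finset.range M, (1 - z₀^(2*k+1))^(v k)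
          = ∏ k ∈ Finset.range M,
              (1 - z₀^(2*k+1))^((if q ≤ k then 1 else 0) + (if M - q ≤ k then 1 else 0)) := by
        refine Finset.prod_congr rfl fun k hk => ?_
        simp only [Finset.mem_range] at hk
        rw [hvf k hk]
      rw [hNum, hDen]
      exact stmt7.lemAux M q hM hq1 h2q z₀ hz0 h2M hzM hω hne
    have hα2 : z₀^(2*q) ≠ 1 := hne (2*q) (by omega) (by omega)
    constructor
    · intro h1
      exfalso
      rcases le_or_gt 0 p with hs | hs
      · have hqp : (q:ℤ) = p := by rw [hqabs, abs_of_nonneg hs]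
        apply hα2
        rw [← zpow_natCast z₀ (2*q), show ((2*q : ℕ) : ℤ) = 2*p from by push_cast; omega, ← hα]
        exact h1
      · have hqp : (q:ℤ) = -p := by rw [hqabs, abs_of_neg hs]
        apply hα2
        have hαi : z₀^(2*q) = α⁻¹ := by
          rw [hα, ← zpow_natCast z₀ (2*q), ← zpow_neg]
          congr 1
          push_cast
          omega
        rw [hαi, h1, inv_one]
    · intro _
      rcases le_or_gt 0 p with hs | hs
      · left
        have hqp : (q:ℤ) = p := by rw [hqabs, abs_of_nonneg hs]
        rw [key, hα,
          show -(q:ℤ) = -p from by omega,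
          show (z₀:ℂ)^(2*q) = z₀^((2:ℤ)*p) from by
            rw [← zpow_natCast z₀ (2*q)]; congr 1; push_cast; omega]
      · right
        have hqp : (q:ℤ) = -p := by rw [hqabs, abs_of_neg hs]
        have hu0 : z₀^(p:ℤ) ≠ 0 := zpow_ne_zero _ hz0
        rw [key, hα,
          show z₀^(-(q:ℤ)) = z₀^(p:ℤ) from by rw [show -(q:ℤ) = p from by omega],
          show (z₀:ℂ)^(2*q) = (z₀^(p:ℤ) * z₀^(p:ℤ))⁻¹ from by
            rw [← zpow_add₀ hz0, ← zpow_neg, ← zpow_natCast z₀ (2*q)]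
            congr 1
            push_cast
            omega,
          show z₀^(-p) = (z₀^(p:ℤ))⁻¹ from zpow_neg z₀ p,
          show z₀^((2:ℤ)*p) = z₀^(p:ℤ) * z₀^(p:ℤ) from by
            rw [← zpow_add₀ hz0]; congr 1; ring]
        field_simp
        ring
end
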